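/- For integers n ≥ 2, m ≥ 1 and 0 ≤ k ≤ n−1: Σ_{i=0}^{k} (1/(i+1))·C(n−1,i)·C(mn−2,i)·C(n−1−i, n−1−k) = (1/(k+1))·C(n−1,k)·C(mn+k−1,k). -/

import Mathlib

open Finset

-- trinomial revision
lemma trinom {l k i : ℕ} (hik : i ≤ k) (hk : k ≤ l) :
    l.choose i * (l - i).choose (k - i) = l.choose k * k.choose i := by
  have hpos : 0 < Nat.factorial i * Nat.factorial (k - i) * Nat.factorial (l - k) := by
    positivity
  apply Nat.eq_of_mul_eq_mul_right hpos
  have h1 : l.choose i * Nat.factorial i * Nat.factorial (l - i) = Nat.factorial l :=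
    Nat.choose_mul_factorial_mul_factorial (hik.trans hk)
  have h2 : (l - i).choose (k - i) * Nat.factorial (k - i) * Nat.factorial (l - i - (k - i)) =
      Nat.factorial (l - i) := Nat.choose_mul_factorial_mul_factorial (by omega)
  have h3 : l.choose k * Nat.factorial k * Nat.factorial (l - k) = Nat.factorial l :=
    Nat.choose_mul_factorial_mul_factorial hk
  have h4 : k.choose i * Nat.factorial i * Nat.factorial (k - i) = Nat.factorial k :=
    Nat.choose_mul_factorial_mul_factorial hik
  have he : l - i - (k - i) = l - k := by omega
  rw [he] at h2
  calc l.choose i * (l - i).choose (k - i) *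
        (Nat.factorial i * Nat.factorial (k - i) * Nat.factorial (l - k))
      = (l.choose i * Nat.factorial i) *
        ((l - i).choose (k - i) * Nat.factorial (k - i) * Nat.factorial (l - k)) := by ring
    _ = l.choose i * Nat.factorial i * Nat.factorial (l - i) := by rw [h2]
    _ = Nat.factorial l := h1
    _ = l.choose k * Nat.factorial k * Nat.factorial (l - k) := h3.symm
    _ = l.choose k * (k.choose i * Nat.factorial i * Nat.factorial (k - i)) *
        Nat.factorial (l - k) := by rw [h4]
    _ = l.choose k * k.choose i *
        (Nat.factorial i * Nat.factorial (k - i) * Nat.factorial (l - k)) := by ring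

lemma vander (N k : ℕ) :
    ∑ i ∈ Finset.range (k + 1), k.choose i * (N + 1).choose (i + 1)
      = (N + k + 1).choose (k + 1) := by
  have h := Nat.add_choose_eq (N + 1) k (k + 1)
  rw [Finset.Nat.sum_antidiagonal_eq_sum_range_succ_mk, Finset.sum_range_succ'] at h
  simp only [Nat.choose_zero_right, one_mul, Nat.sub_zero, Nat.choose_succ_self, mul_zero, add_zero] at h
  have : (N + 1 + k) = N + k + 1 := by ring
  rw [this] at h
  rw [h]
  apply Finset.sum_congr rfl
  intro i hi
  rw [Finset.mem_range] at hi
  have hik : i ≤ k := by omega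
  have : k + 1 - (i + 1) = k - i := by omega
  rw [this, Nat.choose_symm hik, mul_comm]

/-- The relation `f⁺_{k−1}(A_{n−1}, m) = Σ_{i=0}^{k} h⁺ᵢ(A_{n−1}, m)·C(ℓ−i, ℓ−k)` with
`ℓ = n−1`, where `h⁺ᵢ(A_{n−1},m) = (1/(i+1))·C(n−1,i)·C(mn−2,i)` and
`f⁺_{k−1}(A_{n−1},m) = (1/(k+1))·C(n−1,k)·C(mn+k−1,k)`. -/
theorem fh_relation_typeA (m n k : ℕ) (hn : 2 ≤ n) (hm : 1 ≤ m) (hk : k ≤ n - 1) :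
    ∑ i ∈ Finset.range (k + 1),
        (1 / (i + 1 : ℚ)) * ((n - 1).choose i : ℚ) * ((m * n - 2).choose i : ℚ) *
          ((n - 1 - i).choose (n - 1 - k) : ℚ)
      = (1 / (k + 1 : ℚ)) * ((n - 1).choose k : ℚ) * ((m * n + k - 1).choose k : ℚ) := by
  have h2 : 2 ≤ m * n := le_trans hn (Nat.le_mul_of_pos_left n hm)
  set N := m * n - 2 with hN
  have hc : m * n + k - 1 = N + k + 1 := by omega
  rw [hc]
  have hterm : ∀ i ∈ Finset.range (k + 1),
      (1 / (i + 1 : ℚ)) * ((n - 1).choose i : ℚ) * (N.choose i : ℚ) *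
        ((n - 1 - i).choose (n - 1 - k) : ℚ)
      = ((n - 1).choose k : ℚ) * (1 / (N + 1 : ℚ)) *
          ((k.choose i * (N + 1).choose (i + 1) : ℕ) : ℚ) := by
    intro i hi
    rw [Finset.mem_range] at hi
    have hik : i ≤ k := by omega
    have e1 : (n - 1 - i).choose (n - 1 - k) = (n - 1 - i).choose (k - i) := by
      have hh : (n - 1 - i) - (k - i) = n - 1 - k := by omega
      rw [← hh, Nat.choose_symm (by omega)]
    have e2 : (n - 1).choose i * (n - 1 - i).choose (k - i)
        = (n - 1).choose k * k.choose i := trinom hik hk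
    have e3 : (N + 1) * N.choose i = (N + 1).choose (i + 1) * (i + 1) :=
      Nat.add_one_mul_choose_eq N i
    have e2q : ((n - 1).choose i : ℚ) * ((n - 1 - i).choose (k - i) : ℚ)
        = ((n - 1).choose k : ℚ) * (k.choose i : ℚ) := by exact_mod_cast e2
    have e3q : ((N : ℚ) + 1) * (N.choose i : ℚ)
        = ((N + 1).choose (i + 1) : ℚ) * ((i : ℚ) + 1) := by exact_mod_cast e3
    rw [e1]
    have hi1 : ((i : ℚ) + 1) ≠ 0 := by positivity
    have hN1 : ((N : ℚ) + 1) ≠ 0 := by positivity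
    push_cast
    field_simp
    linear_combination ((N.choose i : ℚ) * ((N : ℚ) + 1)) * e2q +
      (((n - 1).choose k : ℚ) * (k.choose i : ℚ)) * e3q
  rw [Finset.sum_congr rfl hterm, ← Finset.mul_sum, ← Nat.cast_sum, vander]
  have hr := Nat.choose_succ_right_eq (N + k + 1) k
  rw [show N + k + 1 - k = N + 1 by omega] at hr
  have hrq : ((N + k + 1).choose (k + 1) : ℚ) * ((k : ℚ) + 1)
      = ((N + k + 1).choose k : ℚ) * ((N : ℚ) + 1) := by exact_mod_cast hr
  have hi1 : ((k : ℚ) + 1) ≠ 0 := by positivity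
  have hN1 : ((N : ℚ) + 1) ≠ 0 := by positivity
  field_simp
  linear_combination ((n - 1).choose k : ℚ) * hrq
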